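/- Let v be a weight on the unit disc of the form v = |μ|, where μ is analytic and zero-free on the disc, and let 1 ≤ p < ∞. Then for every f in the weighted Bergman space A_v^p and every z in the unit disc, |f(z)| ≤ ‖f‖_{A_v^p} / ((1-|z|²)^{2/p} · v(z)^{1/p}). -/

import Mathlib

open MeasureTheory Metric Complex

/-- Normalized area measure on the unit disc. -/
noncomputable def dA : Measure ℂ :=
  (ENNReal.ofReal Real.pi)⁻¹ • (volume.restrict (ball (0:ℂ) 1))

/-- A weight: strictly positive, bounded, continuous on the disc. -/
def IsWeight (v : ℂ → ℝ) : Prop :=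
  ContinuousOn v (ball (0:ℂ) 1) ∧ (∀ z ∈ ball (0:ℂ) 1, 0 < v z) ∧
    ∃ C : ℝ, ∀ z ∈ ball (0:ℂ) 1, v z ≤ C

/-- `v = |μ|` with `μ` analytic and zero-free on the disc. -/
def IsAnalyticWeight (v : ℂ → ℝ) (μ : ℂ → ℂ) : Prop :=
  DifferentiableOn ℂ μ (ball (0:ℂ) 1) ∧ (∀ z ∈ ball (0:ℂ) 1, μ z ≠ 0) ∧
    ∀ z ∈ ball (0:ℂ) 1, v z = ‖μ z‖

/-- The (vector-valued) weighted Bergman norm. -/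
noncomputable def bergNorm (X : Type*) [NormedAddCommGroup X] (p : ℝ) (v : ℂ → ℝ)
    (f : ℂ → X) : ℝ :=
  (∫ z, ‖f z‖ ^ p * v z ∂dA) ^ (1/p)

/-- The weak vector-valued weighted Bergman norm. -/
noncomputable def wBergNorm (X : Type*) [NormedAddCommGroup X] [NormedSpace ℂ X]
    (p : ℝ) (v : ℂ → ℝ) (f : ℂ → X) : ℝ :=
  ⨆ l : {l : StrongDual ℂ X // ‖l‖ ≤ 1},
    bergNorm ℂ p v (fun z => (l : StrongDual ℂ X) (f z))

/-- The (vector-valued) weighted Hardy norm. -/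
noncomputable def hardyNorm (X : Type*) [NormedAddCommGroup X] (p : ℝ) (v : ℂ → ℝ)
    (f : ℂ → X) : ℝ :=
  ⨆ r : Set.Ioo (0:ℝ) 1,
    ((2*Real.pi)⁻¹ * ∫ θ in (0:ℝ)..(2*Real.pi),
      ‖f (((r:ℝ):ℂ) * Complex.exp (θ * Complex.I))‖ ^ p *
        v (((r:ℝ):ℂ) * Complex.exp (θ * Complex.I))) ^ (1/p)

/-- The weak vector-valued weighted Hardy norm. -/
noncomputable def wHardyNorm (X : Type*) [NormedAddCommGroup X] [NormedSpace ℂ X]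
    (p : ℝ) (v : ℂ → ℝ) (f : ℂ → X) : ℝ :=
  ⨆ l : {l : StrongDual ℂ X // ‖l‖ ≤ 1},
    hardyNorm ℂ p v (fun z => (l : StrongDual ℂ X) (f z))


namespace Stmt0Aux

open intervalIntegral
open scoped Real Topology NNReal ENNReal

lemma exists_primitive {h : ℂ → ℂ} (hh : DifferentiableOn ℂ h (ball (0:ℂ) 1)) :
    ∃ H : ℂ → ℂ, ∀ w ∈ ball (0:ℂ) 1, HasDerivAt H (h w) w := by
  have hop : IsOpen (ball (0:ℂ) 1) := isOpen_ball
  have hA : AnalyticOnNhd ℂ h (ball (0:ℂ) 1) := hh.analyticOnNhd hop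
  obtain ⟨p, hp⟩ := hA 0 (by simp)
  have hball : ∀ r : ℝ≥0, 0 < r → (r : ℝ) < 1 → HasFPowerSeriesOnBall h p 0 r := by
    intro r hr0 hr1
    have hsub : ball (0:ℂ) r ⊆ ball (0:ℂ) 1 := ball_subset_ball hr1.le
    have hcl : closure (ball (0:ℂ) r) ⊆ ball (0:ℂ) 1 :=
      closure_ball_subset_closedBall.trans (closedBall_subset_ball hr1)
    have hd : DiffContOnCl ℂ h (ball (0:ℂ) r) :=
      ⟨hh.mono hsub, hh.continuousOn.mono hcl⟩
    have h2 := hd.hasFPowerSeriesOnBall (by exact_mod_cast hr0)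
    rwa [h2.hasFPowerSeriesAt.eq_formalMultilinearSeries hp] at h2
  set a : ℕ → ℂ := fun n => p.coeff n with ha
  have hcoeff : ∀ n, ‖a n‖ ≤ ‖p n‖ := by
    intro n
    show ‖p.coeff n‖ ≤ ‖p n‖
    have h0 := (p n).le_opNorm (fun _ => (1:ℂ))
    simp only [norm_one, Finset.prod_const_one, mul_one] at h0
    exact h0
  have hsummable : ∀ w : ℂ, ‖w‖ < 1 → Summable (fun n => ‖p n‖ * ‖w‖ ^ n) := by
    intro w hw
    have hw0 : (0:ℝ) ≤ ‖w‖ := norm_nonneg w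
    set t : ℝ≥0 := ⟨(1 + ‖w‖) / 2, by positivity⟩ with ht
    have h1 : ‖w‖ < (t : ℝ) := by simp only [ht]; change _ < (1 + ‖w‖) / 2; linarith
    have h2 : (t : ℝ) < 1 := by simp only [ht]; change (1 + ‖w‖) / 2 < _; linarith
    have ht0 : (0:ℝ) < t := lt_of_le_of_lt hw0 h1
    have h3 : (↑‖w‖₊ : ℝ≥0∞) < p.radius := by
      refine lt_of_lt_of_le ?_ (hball t (by exact_mod_cast ht0) h2).r_le
      exact_mod_cast (by exact_mod_cast h1 : ‖w‖₊ < t)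
    have h4 := p.summable_norm_mul_pow h3
    simpa only [coe_nnnorm] using h4
  have hbound : ∀ w : ℂ, ‖w‖ < 1 → ∀ n : ℕ,
      ‖(a n / (n + 1)) * w ^ (n + 1)‖ ≤ ‖p n‖ * ‖w‖ ^ n := by
    intro w hw n
    have hw0 : (0:ℝ) ≤ ‖w‖ := norm_nonneg w
    have hcast : ((n:ℂ) + 1) = ((n + 1 : ℕ) : ℂ) := by push_cast; ring
    have hnormn : ‖((n:ℂ) + 1)‖ = (n:ℝ) + 1 := by
      rw [hcast, Complex.norm_natCast]; push_cast; ring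
    have h1 : ‖(a n / (n + 1)) * w ^ (n + 1)‖ = ‖a n‖ / ((n:ℝ) + 1) * ‖w‖ ^ (n + 1) := by
      rw [norm_mul, norm_div, norm_pow, hnormn]
    rw [h1]
    have h2 : ‖a n‖ / ((n:ℝ) + 1) ≤ ‖p n‖ := by
      refine le_trans ?_ (hcoeff n)
      rw [div_le_iff₀ (by positivity)]
      nlinarith [norm_nonneg (a n), (by exact_mod_cast Nat.le_add_left 1 n : (1:ℝ) ≤ (n:ℝ) + 1)]
    have h3 : ‖w‖ ^ (n + 1) ≤ ‖w‖ ^ n :=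
      pow_le_pow_of_le_one hw0 hw.le (Nat.le_succ n)
    exact mul_le_mul h2 h3 (by positivity) (norm_nonneg _)
  set F : ℕ → ℂ → ℂ := fun N w => ∑ n ∈ Finset.range N, (a n / (n + 1)) * w ^ (n + 1) with hF
  set F' : ℕ → ℂ → ℂ := fun N w => ∑ n ∈ Finset.range N, a n * w ^ n with hF'
  set H : ℂ → ℂ := fun w => ∑' n, (a n / (n + 1)) * w ^ (n + 1) with hH
  have huniform : TendstoLocallyUniformlyOn F' h Filter.atTop (ball (0:ℂ) 1) := by
    rw [tendstoLocallyUniformlyOn_iff_forall_isCompact hop]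
    intro K hK hKc
    rcases K.eq_empty_or_nonempty with rfl | hne
    · simp [tendstoUniformlyOn_empty]
    obtain ⟨x₀, hx₀K, hmax⟩ := hKc.exists_isMaxOn hne continuous_norm.continuousOn
    have hx₀ : ‖x₀‖ < 1 := by simpa [mem_ball, dist_eq_norm] using hK hx₀K
    set t : ℝ := (1 + ‖x₀‖) / 2 with htdef
    have hx0 : (0:ℝ) ≤ ‖x₀‖ := norm_nonneg _
    have ht1 : ‖x₀‖ < t := by simp only [htdef]; linarith
    have ht2 : t < 1 := by simp only [htdef]; linarith
    have ht0 : 0 < t := lt_of_le_of_lt hx0 ht1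
    set r' : ℝ≥0 := ⟨t, ht0.le⟩ with hr'
    set r : ℝ≥0 := ⟨(t + 1) / 2, by positivity⟩ with hr
    have hrr : (r' : ℝ≥0∞) < r := by
      rw [ENNReal.coe_lt_coe, ← NNReal.coe_lt_coe]
      simp only [hr', hr, NNReal.coe_mk]
      change t < (t + 1) / 2
      linarith
    have hr1 : (r : ℝ) < 1 := by simp only [hr, NNReal.coe_mk]; change (t + 1) / 2 < 1; linarith
    have hr0 : 0 < r := by
      rw [← NNReal.coe_pos]; change 0 < (t + 1) / 2; linarith
    have hu := (hball r hr0 hr1).tendstoUniformlyOn hrr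
    have hcongr : ∀ (N : ℕ) (y : ℂ), p.partialSum N y = F' N y := by
      intro N y
      unfold FormalMultilinearSeries.partialSum
      refine Finset.sum_congr rfl fun n _ => ?_
      rw [FormalMultilinearSeries.apply_eq_pow_smul_coeff, smul_eq_mul]
      ring
    have hKsub : K ⊆ ball (0:ℂ) r' := by
      intro x hx
      have h5 : ‖x‖ ≤ ‖x₀‖ := hmax hx
      simp only [mem_ball, dist_eq_norm, sub_zero]
      exact lt_of_le_of_lt h5 (show ‖x₀‖ < t from ht1)
    refine ((hu.mono hKsub).congr ?_).congr_right ?_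
    · filter_upwards with N y _ using (hcongr N y)
    · intro y _; simp
  have hderiv : ∀ᶠ N in Filter.atTop, ∀ x ∈ ball (0:ℂ) 1, HasDerivAt (F N) (F' N x) x := by
    filter_upwards with N x _
    refine HasDerivAt.fun_sum fun n _ => ?_
    have h1 : HasDerivAt (fun w : ℂ => w ^ (n + 1)) (((n:ℂ) + 1) * x ^ n) x := by
      have := hasDerivAt_pow (n + 1) x
      simpa using this
    have h2 := h1.const_mul (a n / ((n:ℂ) + 1))
    refine h2.congr_deriv ?_
    have hne : ((n:ℂ) + 1) ≠ 0 := Nat.cast_add_one_ne_zero n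
    field_simp
  have hconv : ∀ x ∈ ball (0:ℂ) 1, Filter.Tendsto (fun N => F N x) Filter.atTop (𝓝 (H x)) := by
    intro x hx
    have hx1 : ‖x‖ < 1 := by simpa [mem_ball, dist_eq_norm] using hx
    have hs : Summable (fun n => (a n / (n + 1)) * x ^ (n + 1)) :=
      Summable.of_norm_bounded (hsummable x hx1) (hbound x hx1)
    exact hs.hasSum.tendsto_sum_nat
  exact ⟨H, fun w hw =>
    hasDerivAt_of_tendstoLocallyUniformlyOn hop huniform hderiv hconv hw⟩



lemma exists_log {μ : ℂ → ℂ} (hd : DifferentiableOn ℂ μ (ball (0:ℂ) 1))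
    (hnz : ∀ z ∈ ball (0:ℂ) 1, μ z ≠ 0) :
    ∃ L : ℂ → ℂ, (∀ w ∈ ball (0:ℂ) 1, DifferentiableAt ℂ L w) ∧
      ∀ w ∈ ball (0:ℂ) 1, Complex.exp (L w) = μ w := by
  have hop : IsOpen (ball (0:ℂ) 1) := isOpen_ball
  have hA : AnalyticOnNhd ℂ μ (ball (0:ℂ) 1) := hd.analyticOnNhd hop
  have hd' : DifferentiableOn ℂ (fun w => deriv μ w * (μ w)⁻¹) (ball (0:ℂ) 1) :=
    hA.deriv.differentiableOn.mul (hd.inv hnz)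
  obtain ⟨H, hH⟩ := exists_primitive hd'
  have h0 : (0:ℂ) ∈ ball (0:ℂ) 1 := by simp
  set L : ℂ → ℂ := fun w => H w - H 0 + Complex.log (μ 0) with hLdef
  have hL : ∀ w ∈ ball (0:ℂ) 1, HasDerivAt L (deriv μ w * (μ w)⁻¹) w := by
    intro w hw
    simpa [hLdef] using ((hH w hw).sub_const (H 0)).add_const (Complex.log (μ 0))
  refine ⟨L, fun w hw => (hL w hw).differentiableAt, ?_⟩
  set N : ℂ → ℂ := fun w => μ w * Complex.exp (-(L w)) with hNdef
  have hN : ∀ w ∈ ball (0:ℂ) 1, HasDerivAt N 0 w := by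
    intro w hw
    have h1 : HasDerivAt μ (deriv μ w) w := (hd.differentiableAt (hop.mem_nhds hw)).hasDerivAt
    have h2 : HasDerivAt (fun x => Complex.exp (-(L x)))
        (Complex.exp (-(L w)) * -(deriv μ w * (μ w)⁻¹)) w := ((hL w hw).neg).cexp
    have h3 := h1.mul h2
    refine h3.congr_deriv ?_
    have hμ : μ w ≠ 0 := hnz w hw
    have hμμ : μ w * (μ w)⁻¹ = 1 := mul_inv_cancel₀ hμ
    linear_combination (-(Complex.exp (-(L w)) * deriv μ w) : ℂ) * hμμ
  have hconst : ∀ w ∈ ball (0:ℂ) 1, N w = N 0 := by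
    intro w hw
    refine (convex_ball (0:ℂ) 1).is_const_of_fderivWithin_eq_zero
      (fun x hx => ((hN x hx).differentiableAt).differentiableWithinAt) ?_ hw h0
    intro x hx
    have h4 : HasFDerivAt N ((1 : ℂ →L[ℂ] ℂ).smulRight (0:ℂ)) x := hN x hx
    have h5 := (h4.hasFDerivWithinAt (s := ball (0:ℂ) 1)).fderivWithin (hop.uniqueDiffWithinAt hx)
    rw [h5]
    ext y
    simp
  intro w hw
  have h6 : N 0 = 1 := by
    simp only [hNdef, hLdef, sub_self, zero_add]
    rw [Complex.exp_neg, Complex.exp_log (hnz 0 h0)]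
    field_simp [hnz 0 h0]
  have h7 : μ w * Complex.exp (-(L w)) = 1 := (hconst w hw).trans h6
  calc Complex.exp (L w) = μ w * Complex.exp (-(L w)) * Complex.exp (L w) := by rw [h7]; ring
  _ = μ w * (Complex.exp (-(L w)) * Complex.exp (L w)) := by ring
  _ = μ w := by rw [← Complex.exp_add, neg_add_cancel, Complex.exp_zero, mul_one]



noncomputable def mo (z w : ℂ) : ℂ := (z + w) / (1 + (starRingEnd ℂ) z * w)

noncomputable def mo' (z w : ℂ) : ℂ :=
  ((1 - Complex.normSq z : ℝ) : ℂ) / (1 + (starRingEnd ℂ) z * w) ^ 2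

lemma one_add_ne {z w : ℂ} (hz : z ∈ ball (0:ℂ) 1) (hw : w ∈ ball (0:ℂ) 1) :
    1 + (starRingEnd ℂ) z * w ≠ 0 := by
  have hz1 : ‖z‖ < 1 := by simpa [mem_ball, dist_eq_norm] using hz
  have hw1 : ‖w‖ < 1 := by simpa [mem_ball, dist_eq_norm] using hw
  have h1 : ‖(starRingEnd ℂ) z * w‖ < 1 := by
    rw [norm_mul, Complex.norm_conj]
    calc ‖z‖ * ‖w‖ ≤ ‖z‖ * 1 :=
          mul_le_mul_of_nonneg_left hw1.le (norm_nonneg z)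
    _ < 1 := by simpa using hz1
  intro h
  have : (starRingEnd ℂ) z * w = -1 := by linear_combination h
  rw [this] at h1
  simp at h1

lemma mo_normSq_identity (z w : ℂ) :
    Complex.normSq (1 + (starRingEnd ℂ) z * w) - Complex.normSq (z + w)
      = (1 - Complex.normSq z) * (1 - Complex.normSq w) := by
  have h1 : ∀ u : ℂ, (Complex.normSq u : ℂ) = u * (starRingEnd ℂ) u := by
    intro u; rw [Complex.mul_conj]
  have key : ((Complex.normSq (1 + (starRingEnd ℂ) z * w) : ℂ))
      - (Complex.normSq (z + w) : ℂ)
      = ((1 - Complex.normSq z : ℝ) : ℂ) * ((1 - Complex.normSq w : ℝ) : ℂ) := by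
    push_cast
    rw [h1, h1, h1, h1]
    simp only [map_add, map_mul, map_one, Complex.conj_conj]
    ring
  have := congrArg Complex.re key
  simpa using this

lemma mo_mem_ball {z w : ℂ} (hz : z ∈ ball (0:ℂ) 1) (hw : w ∈ ball (0:ℂ) 1) :
    mo z w ∈ ball (0:ℂ) 1 := by
  have hne := one_add_ne hz hw
  have hz1 : Complex.normSq z < 1 := by
    have : ‖z‖ < 1 := by simpa [mem_ball, dist_eq_norm] using hz
    nlinarith [Complex.sq_norm z, norm_nonneg z]
  have hw1 : Complex.normSq w < 1 := by
    have : ‖w‖ < 1 := by simpa [mem_ball, dist_eq_norm] using hw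
    nlinarith [Complex.sq_norm w, norm_nonneg w]
  have hkey := mo_normSq_identity z w
  have hpos : 0 < Complex.normSq (1 + (starRingEnd ℂ) z * w) := Complex.normSq_pos.2 hne
  have h2 : Complex.normSq (mo z w)
      = Complex.normSq (z + w) / Complex.normSq (1 + (starRingEnd ℂ) z * w) := by
    rw [mo, Complex.normSq_div]
  have h3 : Complex.normSq (mo z w) < 1 := by
    rw [h2, div_lt_one hpos]
    nlinarith
  have h4 : ‖mo z w‖ < 1 := by
    nlinarith [Complex.sq_norm (mo z w), norm_nonneg (mo z w)]
  simpa [mem_ball, dist_eq_norm] using h4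

lemma mo_neg_cancel {z y : ℂ} (hz : z ∈ ball (0:ℂ) 1) (hy : y ∈ ball (0:ℂ) 1) :
    mo z (mo (-z) y) = y := by
  have hzn : (-z) ∈ ball (0:ℂ) 1 := by simpa [mem_ball, dist_eq_norm] using hz
  have h1 : 1 + (starRingEnd ℂ) (-z) * y ≠ 0 := one_add_ne hzn hy
  have h1' : 1 - (starRingEnd ℂ) z * y ≠ 0 := by simpa [sub_eq_add_neg] using h1
  have hz1 : Complex.normSq z < 1 := by
    have : ‖z‖ < 1 := by simpa [mem_ball, dist_eq_norm] using hz
    nlinarith [Complex.sq_norm z, norm_nonneg z]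
  have h2 : 1 - z * (starRingEnd ℂ) z ≠ 0 := by
    rw [Complex.mul_conj]
    intro h
    have : (Complex.normSq z : ℂ) = 1 := by linear_combination -h
    have := congrArg Complex.re this
    simp at this
    linarith
  have hq : mo (-z) y = (-z + y) / (1 - (starRingEnd ℂ) z * y) := by
    rw [mo, map_neg]
    ring_nf
  have hd : 1 - (starRingEnd ℂ) z * y ≠ 0 := h1'
  have e1 : 1 + (starRingEnd ℂ) z * ((-z + y) / (1 - (starRingEnd ℂ) z * y))
      = (1 - z * (starRingEnd ℂ) z) / (1 - (starRingEnd ℂ) z * y) := by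
    field_simp
    ring
  have e2 : z + (-z + y) / (1 - (starRingEnd ℂ) z * y)
      = y * (1 - z * (starRingEnd ℂ) z) / (1 - (starRingEnd ℂ) z * y) := by
    rw [eq_div_iff hd, add_mul, div_mul_cancel₀ _ hd]
    ring
  rw [mo, hq, e1, e2]
  rw [div_div_div_cancel_right₀ hd, mul_div_assoc, div_self h2, mul_one]

lemma mo_zero (z : ℂ) : mo z 0 = z := by simp [mo]

lemma mo_image {z : ℂ} (hz : z ∈ ball (0:ℂ) 1) :
    mo z '' ball (0:ℂ) 1 = ball (0:ℂ) 1 := by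
  apply Set.Subset.antisymm
  · rintro _ ⟨w, hw, rfl⟩
    exact mo_mem_ball hz hw
  · intro y hy
    have hzn : (-z) ∈ ball (0:ℂ) 1 := by simpa [mem_ball, dist_eq_norm] using hz
    exact ⟨mo (-z) y, mo_mem_ball hzn hy, mo_neg_cancel hz hy⟩

lemma mo_injOn {z : ℂ} (hz : z ∈ ball (0:ℂ) 1) :
    Set.InjOn (mo z) (ball (0:ℂ) 1) := by
  intro w₁ h₁ w₂ h₂ heq
  have hne₁ := one_add_ne hz h₁
  have hne₂ := one_add_ne hz h₂
  have hz1 : Complex.normSq z < 1 := by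
    have : ‖z‖ < 1 := by simpa [mem_ball, dist_eq_norm] using hz
    nlinarith [Complex.sq_norm z, norm_nonneg z]
  have h2 : 1 - z * (starRingEnd ℂ) z ≠ 0 := by
    rw [Complex.mul_conj]
    intro h
    have h' : (Complex.normSq z : ℂ) = 1 := by linear_combination -h
    have := congrArg Complex.re h'
    simp at this
    linarith
  rw [mo, mo, div_eq_div_iff hne₁ hne₂] at heq
  have hkey : (w₁ - w₂) * (1 - z * (starRingEnd ℂ) z) = 0 := by linear_combination heq
  rcases mul_eq_zero.1 hkey with h | h
  · exact sub_eq_zero.1 h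
  · exact absurd h h2

lemma mo_hasDerivAt {z : ℂ} (hz : z ∈ ball (0:ℂ) 1) {w : ℂ} (hw : w ∈ ball (0:ℂ) 1) :
    HasDerivAt (mo z) (mo' z w) w := by
  have hne := one_add_ne hz hw
  have h1 : HasDerivAt (fun w : ℂ => z + w) 1 w := by
    simpa using (hasDerivAt_id w).const_add z
  have h2 : HasDerivAt (fun w : ℂ => 1 + (starRingEnd ℂ) z * w) ((starRingEnd ℂ) z) w := by
    simpa using ((hasDerivAt_id w).const_mul ((starRingEnd ℂ) z)).const_add 1
  have h3 := h1.div h2 hne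
  have : mo z = fun w => (z + w) / (1 + (starRingEnd ℂ) z * w) := rfl
  rw [this]
  refine h3.congr_deriv ?_
  rw [mo']
  have : ((1 - Complex.normSq z : ℝ) : ℂ) = 1 - z * (starRingEnd ℂ) z := by
    push_cast
    rw [Complex.mul_conj]
  rw [this]
  field_simp
  ring

lemma det_restrict (d : ℂ) :
    (((1 : ℂ →L[ℂ] ℂ).smulRight d).restrictScalars ℝ).det = Complex.normSq d := by
  have h1 : ((((1 : ℂ →L[ℂ] ℂ).smulRight d).restrictScalars ℝ) : ℂ →ₗ[ℝ] ℂ)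
      = Algebra.lmul ℝ ℂ d := by
    ext1 x
    simp [mul_comm]
  rw [ContinuousLinearMap.det, h1]
  rw [← Algebra.norm_apply, Algebra.norm_complex_apply]

/-- Mean value property over circles for functions analytic on the unit ball. -/
lemma circle_mean_value {g : ℂ → ℂ} (hg : DifferentiableOn ℂ g (ball (0:ℂ) 1))
    {r : ℝ} (hr0 : 0 < r) (hr1 : r < 1) :
    ∫ θ in (0:ℝ)..(2 * π), g (circleMap 0 r θ) = (2 * π : ℝ) • g 0 := by
  have hd : DiffContOnCl ℂ g (ball (0:ℂ) r) := by
    refine ⟨hg.mono (ball_subset_ball hr1.le), hg.continuousOn.mono ?_⟩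
    exact closure_ball_subset_closedBall.trans (closedBall_subset_ball hr1)
  have h0 : (0:ℂ) ∈ ball (0:ℂ) r := mem_ball_self hr0
  have hcauchy := hd.circleIntegral_sub_inv_smul h0
  rw [circleIntegral] at hcauchy
  have hint : ∀ θ : ℝ, deriv (circleMap 0 r) θ • (circleMap 0 r θ - 0)⁻¹ • g (circleMap 0 r θ)
      = Complex.I • g (circleMap 0 r θ) := by
    intro θ
    have hne : circleMap 0 r θ ≠ 0 := by
      simpa using circleMap_ne_center (c := (0:ℂ)) hr0.ne' (θ := θ)
    rw [deriv_circleMap, smul_eq_mul, smul_eq_mul, smul_eq_mul, sub_zero]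
    field_simp
  rw [intervalIntegral.integral_congr (fun θ _ => hint θ)] at hcauchy
  rw [intervalIntegral.integral_smul] at hcauchy
  have hI : (Complex.I : ℂ) ≠ 0 := Complex.I_ne_zero
  have h2 : (2 * ↑π * Complex.I : ℂ) • g 0 = Complex.I • ((2 * π : ℝ) • g 0) := by
    simp only [smul_eq_mul, Complex.real_smul]
    push_cast
    ring
  rw [h2] at hcauchy
  exact smul_right_injective ℂ hI hcauchy

/-- Jensen / Hölder on the circle. -/
lemma circle_jensen {g : ℂ → ℂ} (hg : DifferentiableOn ℂ g (ball (0:ℂ) 1))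
    {p : ℝ} (hp : 1 ≤ p) {r : ℝ} (hr0 : 0 < r) (hr1 : r < 1) :
    2 * π * ‖g 0‖ ^ p ≤ ∫ θ in (0:ℝ)..(2 * π), ‖g (circleMap 0 r θ)‖ ^ p := by
  have hπ : (0:ℝ) < 2 * π := by positivity
  have hp0 : 0 < p := lt_of_lt_of_le one_pos hp
  set u : ℝ → ℂ := fun θ => g (circleMap 0 r θ) with hu
  have hucont : Continuous u := by
    apply hg.continuousOn.comp_continuous (continuous_circleMap 0 r)
    intro θ
    simp [mem_ball, dist_eq_norm, abs_of_pos hr0, hr1]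
  have hmean := circle_mean_value hg hr0 hr1
  have h1 : ‖g 0‖ ≤ (2 * π)⁻¹ * ∫ θ in (0:ℝ)..(2 * π), ‖u θ‖ := by
    have h2 : (2 * π) * ‖g 0‖ = ‖∫ θ in (0:ℝ)..(2 * π), u θ‖ := by
      rw [hmean, norm_smul, Real.norm_of_nonneg hπ.le]
    have h3 : ‖∫ θ in (0:ℝ)..(2 * π), u θ‖ ≤ ∫ θ in (0:ℝ)..(2 * π), ‖u θ‖ :=
      intervalIntegral.norm_integral_le_integral_norm hπ.le
    rw [inv_mul_eq_div, le_div_iff₀' hπ]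
    exact h2.le.trans h3
  -- pass to set integrals over Ioc
  have hio : ∀ F : ℝ → ℝ, (∫ θ in (0:ℝ)..(2 * π), F θ) = ∫ θ in Set.Ioc (0:ℝ) (2 * π), F θ :=
    fun F => intervalIntegral.integral_of_le hπ.le
  set μ₀ : Measure ℝ := volume.restrict (Set.Ioc (0:ℝ) (2 * π)) with hμ₀
  haveI : IsFiniteMeasure μ₀ := by
    constructor
    rw [hμ₀, Measure.restrict_apply_univ, Real.volume_Ioc]
    exact ENNReal.ofReal_lt_top
  obtain ⟨C, hC⟩ := (isCompact_Icc (a := (0:ℝ)) (b := 2 * π)).exists_bound_of_continuousOn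
    hucont.norm.continuousOn
  have hFb : MemLp (fun θ => ‖u θ‖) (ENNReal.ofReal p) μ₀ := by
    refine MemLp.of_bound (hucont.norm.aestronglyMeasurable.restrict) C ?_
    filter_upwards [ae_restrict_mem measurableSet_Ioc] with θ hθ
    exact hC θ (Set.Ioc_subset_Icc_self hθ)
  have hA0 : 0 ≤ ∫ θ in Set.Ioc (0:ℝ) (2 * π), ‖u θ‖ ^ p :=
    setIntegral_nonneg measurableSet_Ioc fun θ _ => Real.rpow_nonneg (norm_nonneg _) p
  set A : ℝ := ∫ θ in Set.Ioc (0:ℝ) (2 * π), ‖u θ‖ ^ p with hA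
  have hkey : ‖g 0‖ ≤ ((2 * π)⁻¹ * A) ^ (1 / p) := by
    rcases eq_or_lt_of_le hp with heq | hlt
    · subst heq
      simp only [one_div, inv_one, Real.rpow_one] at *
      refine h1.trans (le_of_eq ?_)
      rw [hio]
      congr 1
      refine setIntegral_congr_fun measurableSet_Ioc fun θ _ => ?_
      rw [Real.rpow_one]
    · set q : ℝ := p.conjExponent with hq
      have hpq : p.HolderConjugate q := Real.HolderConjugate.conjExponent hlt
      have hG1 : MemLp (fun _ : ℝ => (1:ℝ)) (ENNReal.ofReal q) μ₀ := memLp_const 1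
      have hhold := integral_mul_le_Lp_mul_Lq_of_nonneg hpq
        (Filter.Eventually.of_forall fun θ => norm_nonneg (u θ))
        (Filter.Eventually.of_forall fun _ => zero_le_one) hFb hG1
      simp only [mul_one] at hhold
      have hone : (∫ _ in Set.Ioc (0:ℝ) (2 * π), (1:ℝ) ^ q ∂volume) = 2 * π := by
        simp only [Real.one_rpow]
        rw [setIntegral_const, Real.volume_real_Ioc, smul_eq_mul, mul_one,
          max_eq_left (by linarith)]
        ring
      rw [hone] at hhold
      have h4 : ‖g 0‖ ≤ (2 * π)⁻¹ * (A ^ (1 / p) * (2 * π) ^ (1 / q)) := by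
        refine h1.trans ?_
        rw [hio]
        exact mul_le_mul_of_nonneg_left hhold (by positivity)
      refine h4.trans (le_of_eq ?_)
      have hpinv : -(1/p) = 1/q - 1 := by
        have h7 := hpq.inv_add_inv_eq_one
        rw [one_div, one_div]
        linarith
      have e1 : ((2 * π)⁻¹ * A) ^ (1/p) = ((2 * π)⁻¹) ^ (1/p : ℝ) * A ^ (1/p) :=
        Real.mul_rpow (by positivity) hA0
      have e2 : ((2 * π)⁻¹ : ℝ) ^ (1/p : ℝ) = (2 * π)⁻¹ * (2 * π) ^ (1/q : ℝ) := by
        rw [Real.inv_rpow hπ.le, ← Real.rpow_neg hπ.le, hpinv, Real.rpow_sub hπ, Real.rpow_one]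
        ring
      rw [e1, e2]
      ring
  have h5 : ‖g 0‖ ^ p ≤ (2 * π)⁻¹ * A := by
    have h6 := Real.rpow_le_rpow (norm_nonneg _) hkey hp0.le
    rwa [← Real.rpow_mul (by positivity), one_div_mul_cancel hp0.ne', Real.rpow_one] at h6
  rw [hio]
  calc 2 * π * ‖g 0‖ ^ p ≤ 2 * π * ((2 * π)⁻¹ * A) := by
        exact mul_le_mul_of_nonneg_left h5 hπ.le
  _ = A := by field_simp



lemma radial_bound {g : ℂ → ℂ} (hg : DifferentiableOn ℂ g (ball (0:ℂ) 1)) {p : ℝ} (hp : 1 ≤ p)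
    {W : ℂ → ℝ} (hWg : ∀ w ∈ ball (0:ℂ) 1, W w = ‖g w‖ ^ p)
    (hWint : IntegrableOn W (ball (0:ℂ) 1) volume) :
    π * ‖g 0‖ ^ p ≤ ∫ w in ball (0:ℂ) 1, W w := by
  have hπ : (0:ℝ) < π := Real.pi_pos
  set e : ℂ ≃ᵐ ℝ × ℝ := Complex.measurableEquivRealProd with he
  have hvol : MeasurePreserving e := Complex.volume_preserving_equiv_real_prod
  set rect : Set (ℝ × ℝ) := Set.Ioo (0:ℝ) 1 ×ˢ Set.Ioo (-π) π with hrect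
  set E₂ : Set (ℝ × ℝ) := polarCoord.symm '' rect with hE₂
  set Ec : Set ℂ := Complex.polarCoord.symm '' rect with hEc
  have hrt : rect ⊆ polarCoord.target := by
    rintro ⟨r, θ⟩ ⟨h1, h2⟩
    exact ⟨Set.Ioo_subset_Ioi_self h1, h2⟩
  have hrtC : rect ⊆ Complex.polarCoord.target := hrt
  -- the complex polar symm is e.symm ∘ polarCoord.symm
  have hcomp : ∀ q : ℝ × ℝ, Complex.polarCoord.symm q = e.symm (polarCoord.symm q) :=
    fun q => rfl
  have hpre : e ⁻¹' E₂ = Ec := by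
    ext x
    simp only [Set.mem_preimage, hE₂, hEc, Set.mem_image]
    constructor
    · rintro ⟨q, hq, hq2⟩
      exact ⟨q, hq, by rw [hcomp q, hq2]; simp⟩
    · rintro ⟨q, hq, rfl⟩
      exact ⟨q, hq, by rw [hcomp q]; simp⟩
  -- characterize Ec
  have hEcball : Ec = ball (0:ℂ) 1 ∩ Complex.slitPlane := by
    apply Set.Subset.antisymm
    · rintro _ ⟨q, hq, rfl⟩
      constructor
      · have h1 : ‖Complex.polarCoord.symm q‖ = |q.1| := norm_polarCoord_symm q
        rw [mem_ball, dist_eq_norm, sub_zero, h1,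
          abs_of_pos hq.1.1]
        exact hq.1.2
      · have := Complex.polarCoord.map_target (hrtC hq)
        rwa [Complex.polarCoord_source] at this
    · rintro w ⟨hwb, hws⟩
      have hw0 : w ≠ 0 := by
        rintro rfl
        simpa [Complex.mem_slitPlane_iff] using hws
      have hsrc : w ∈ Complex.polarCoord.source := by rwa [Complex.polarCoord_source]
      have htgt := Complex.polarCoord.map_source hsrc
      rw [Complex.polarCoord_target] at htgt
      refine ⟨Complex.polarCoord w, ?_, Complex.polarCoord.left_inv hsrc⟩
      rw [Complex.polarCoord_apply] at htgt ⊢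
      refine ⟨⟨?_, ?_⟩, htgt.2⟩
      · exact norm_pos_iff.2 hw0
      · rwa [mem_ball, dist_eq_norm, sub_zero] at hwb
  -- the difference is contained in the null real line
  have hline : volume {w : ℂ | w.im = 0} = 0 := by
    have hset : {w : ℂ | w.im = 0} = e ⁻¹' (Set.univ ×ˢ ({0} : Set ℝ)) := by
      ext w
      simp [he, Complex.measurableEquivRealProd, Complex.equivRealProd, eq_comm]
    rw [hset, hvol.measure_preimage (MeasurableSet.univ.prod
      (measurableSet_singleton 0)).nullMeasurableSet]
    rw [Measure.volume_eq_prod, Measure.prod_prod]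
    simp
  have hae : ball (0:ℂ) 1 =ᵐ[volume] Ec := by
    rw [MeasureTheory.ae_eq_set]
    constructor
    · refine measure_mono_null ?_ hline
      rw [hEcball]
      intro w hw
      simp only [Set.mem_diff, Set.mem_inter_iff, not_and] at hw
      have := hw.2 hw.1
      simp only [Complex.mem_slitPlane_iff, not_or, not_lt, ne_eq, not_not] at this
      exact this.2
    · rw [hEcball]
      simp [Set.diff_eq_empty.2 Set.inter_subset_left]
  have hEcsub : Ec ⊆ ball (0:ℂ) 1 := by rw [hEcball]; exact Set.inter_subset_left
  -- step 1 : ball integral = Ec integral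
  have step1 : ∫ w in ball (0:ℂ) 1, W w = ∫ w in Ec, W w := setIntegral_congr_set hae
  have hWiEc : IntegrableOn W Ec volume := hWint.mono_set hEcsub
  -- step 2 : transfer to ℝ × ℝ
  have step2 : ∫ w in Ec, W w = ∫ q in E₂, W (e.symm q) := by
    rw [← hpre]
    have h3 := hvol.setIntegral_preimage_emb e.measurableEmbedding
      (fun q => W (e.symm q)) E₂
    rw [← h3]
    simp
  have hWiE₂ : IntegrableOn (fun q => W (e.symm q)) E₂ volume := by
    have hfun : ((fun q => W (e.symm q)) ∘ ⇑e) = W := by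
      funext x; simp
    have h4 : Integrable ((fun q => W (e.symm q)) ∘ ⇑e) (volume.restrict (⇑e ⁻¹' E₂)) := by
      rw [hfun, hpre]; exact hWiEc
    exact ((hvol.restrict_preimage_emb e.measurableEmbedding E₂).integrable_comp_emb
      e.measurableEmbedding).1 h4
  -- step 3 : polar change of variables
  have hBder : ∀ q ∈ rect, HasFDerivWithinAt polarCoord.symm
      (LinearMap.toContinuousLinearMap (Matrix.toLin (Module.Basis.finTwoProd ℝ) (Module.Basis.finTwoProd ℝ)
        !![Real.cos q.2, -q.1 * Real.sin q.2; Real.sin q.2, q.1 * Real.cos q.2])) rect q :=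
    fun q _ => (hasFDerivAt_polarCoord_symm q).hasFDerivWithinAt
  have hBdet : ∀ q : ℝ × ℝ, (LinearMap.toContinuousLinearMap (Matrix.toLin (Module.Basis.finTwoProd ℝ)
      (Module.Basis.finTwoProd ℝ)
      !![Real.cos q.2, -q.1 * Real.sin q.2; Real.sin q.2, q.1 * Real.cos q.2])).det = q.1 := by
    intro q
    conv_rhs => rw [← one_mul q.1, ← Real.cos_sq_add_sin_sq q.2]
    simp only [neg_mul, LinearMap.det_toContinuousLinearMap, LinearMap.det_toLin,
      Matrix.det_fin_two_of, sub_neg_eq_add]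
    ring
  have hinj : Set.InjOn polarCoord.symm rect := polarCoord.symm.injOn.mono hrt
  have hrectm : MeasurableSet rect := measurableSet_Ioo.prod measurableSet_Ioo
  have step3 : ∫ q in E₂, W (e.symm q)
      = ∫ q in rect, q.1 * W (circleMap 0 q.1 q.2) := by
    rw [hE₂, integral_image_eq_integral_abs_det_fderiv_smul volume hrectm hBder hinj
      (fun q => W (e.symm q))]
    refine setIntegral_congr_fun hrectm fun q hq => ?_
    rw [hBdet q, smul_eq_mul, abs_of_pos hq.1.1]
    congr 1
    rw [← hcomp q, Complex.polarCoord_symm_apply, circleMap]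
    push_cast
    rw [Complex.exp_mul_I]
    push_cast
    ring
  have hWiRect : IntegrableOn (fun q => q.1 * W (circleMap 0 q.1 q.2)) rect volume := by
    have h5 := (integrableOn_image_iff_integrableOn_abs_det_fderiv_smul volume hrectm hBder hinj
      (fun q => W (e.symm q))).1 (hE₂ ▸ hWiE₂)
    refine h5.congr_fun (fun q hq => ?_) hrectm
    beta_reduce
    rw [hBdet q, smul_eq_mul, abs_of_pos hq.1.1]
    congr 1
    rw [← hcomp q, Complex.polarCoord_symm_apply, circleMap]
    rw [Complex.exp_mul_I]
    push_cast
    ring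
  -- step 4 : Fubini and the radial estimate
  set c : ℝ := ‖g 0‖ ^ p with hc
  have hc0 : 0 ≤ c := Real.rpow_nonneg (norm_nonneg _) p
  have hmem : ∀ r ∈ Set.Ioo (0:ℝ) 1, ∀ θ : ℝ, circleMap 0 r θ ∈ ball (0:ℂ) 1 := by
    intro r hr θ
    simp only [mem_ball, dist_eq_norm, sub_zero, norm_circleMap_zero]
    rw [abs_of_pos hr.1]
    exact hr.2
  have hprod : (volume : Measure (ℝ × ℝ)) = (volume : Measure ℝ).prod volume :=
    Measure.volume_eq_prod ℝ ℝ
  have step4 : ∫ q in rect, q.1 * W (circleMap 0 q.1 q.2)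
      = ∫ r in Set.Ioo (0:ℝ) 1, ∫ θ in Set.Ioo (-π) π, r * W (circleMap 0 r θ) := by
    rw [hrect, hprod]
    refine setIntegral_prod _ ?_
    rw [← hprod, ← hrect]
    exact hWiRect
  have houter_int : IntegrableOn
      (fun r => ∫ θ in Set.Ioo (-π) π, r * W (circleMap 0 r θ)) (Set.Ioo (0:ℝ) 1) volume := by
    have h6 : Integrable (fun q : ℝ × ℝ => q.1 * W (circleMap 0 q.1 q.2))
        ((volume.restrict (Set.Ioo (0:ℝ) 1)).prod (volume.restrict (Set.Ioo (-π) π))) := by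
      rw [Measure.prod_restrict, ← hprod]
      exact hWiRect
    exact h6.integral_prod_left
  have hinner : ∀ r ∈ Set.Ioo (0:ℝ) 1,
      2 * π * c * r ≤ ∫ θ in Set.Ioo (-π) π, r * W (circleMap 0 r θ) := by
    intro r hr
    have h7 : ∫ θ in Set.Ioo (-π) π, r * W (circleMap 0 r θ)
        = r * ∫ θ in Set.Ioo (-π) π, W (circleMap 0 r θ) := integral_const_mul r _
    have h8 : ∫ θ in Set.Ioo (-π) π, W (circleMap 0 r θ)
        = ∫ θ in (0:ℝ)..(2 * π), ‖g (circleMap 0 r θ)‖ ^ p := by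
      rw [setIntegral_congr_fun measurableSet_Ioo (fun θ _ => hWg _ (hmem r hr θ))]
      rw [← MeasureTheory.integral_Ioc_eq_integral_Ioo,
        ← intervalIntegral.integral_of_le (by linarith : (-π:ℝ) ≤ π)]
      have hper : Function.Periodic (fun θ => ‖g (circleMap 0 r θ)‖ ^ p) (2 * π) := by
        intro θ
        simp only [periodic_circleMap 0 r θ]
      have h9 := hper.intervalIntegral_add_eq (-π) 0
      have e1 : -π + 2 * π = π := by ring
      have e2 : (0:ℝ) + 2 * π = 2 * π := by ring
      rw [e1, e2] at h9
      exact h9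
    have h10 : 2 * π * c ≤ ∫ θ in Set.Ioo (-π) π, W (circleMap 0 r θ) := by
      rw [h8]
      exact circle_jensen hg hp hr.1 hr.2
    rw [h7]
    calc 2 * π * c * r = r * (2 * π * c) := by ring
    _ ≤ r * ∫ θ in Set.Ioo (-π) π, W (circleMap 0 r θ) :=
      mul_le_mul_of_nonneg_left h10 hr.1.le
  have hlhs_int : IntegrableOn (fun r : ℝ => 2 * π * c * r) (Set.Ioo (0:ℝ) 1) volume :=
    ((continuous_const.mul continuous_id).integrableOn_Icc (a := (0:ℝ)) (b := 1)).mono_set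
      Set.Ioo_subset_Icc_self
  have houter : ∫ r in Set.Ioo (0:ℝ) 1, 2 * π * c * r
      ≤ ∫ r in Set.Ioo (0:ℝ) 1, ∫ θ in Set.Ioo (-π) π, r * W (circleMap 0 r θ) :=
    setIntegral_mono_on hlhs_int houter_int measurableSet_Ioo hinner
  have hhalf : ∫ r in Set.Ioo (0:ℝ) 1, (r:ℝ) = 1 / 2 := by
    rw [← MeasureTheory.integral_Ioc_eq_integral_Ioo,
      ← intervalIntegral.integral_of_le (zero_le_one), integral_id]
    norm_num
  have hlhs : ∫ r in Set.Ioo (0:ℝ) 1, 2 * π * c * r = π * c := by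
    rw [MeasureTheory.integral_const_mul, hhalf]
    ring
  calc π * c = ∫ r in Set.Ioo (0:ℝ) 1, 2 * π * c * r := hlhs.symm
  _ ≤ ∫ r in Set.Ioo (0:ℝ) 1, ∫ θ in Set.Ioo (-π) π, r * W (circleMap 0 r θ) := houter
  _ = ∫ q in rect, q.1 * W (circleMap 0 q.1 q.2) := step4.symm
  _ = ∫ q in E₂, W (e.symm q) := step3.symm
  _ = ∫ w in Ec, W w := step2.symm
  _ = ∫ w in ball (0:ℂ) 1, W w := step1.symm



end Stmt0Aux

open Stmt0Aux
open scoped Real Topology NNReal ENNReal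

/-- pointwise estimate in the weighted Bergman space. -/
theorem stmt0 (p : ℝ) (hp : 1 ≤ p) (v : ℂ → ℝ) (μ : ℂ → ℂ)
    (hv : IsWeight v) (hvμ : IsAnalyticWeight v μ)
    (f : ℂ → ℂ) (hf : DifferentiableOn ℂ f (ball (0:ℂ) 1))
    (hfp : Integrable (fun z => ‖f z‖ ^ p * v z) dA)
    (z : ℂ) (hz : z ∈ ball (0:ℂ) 1) :
    ‖f z‖ ≤
      bergNorm ℂ p v f / ((1 - ‖z‖ ^ 2) ^ ((2:ℝ)/p) * (v z) ^ (1/p)) := by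
  have hπ : (0:ℝ) < π := Real.pi_pos
  have hp0 : (0:ℝ) < p := lt_of_lt_of_le one_pos hp
  have hpne : p ≠ 0 := hp0.ne'
  have hs1 : Complex.normSq z < 1 := by
    have h := mem_ball_iff_norm.1 hz
    rw [sub_zero] at h
    nlinarith [Complex.sq_norm z, norm_nonneg z]
  have h1s : (0:ℝ) < 1 - Complex.normSq z := by linarith
  obtain ⟨L, hLdiff, hLexp⟩ := exists_log hvμ.1 hvμ.2.1
  have hv_eq : ∀ w ∈ ball (0:ℂ) 1, v w = Real.exp ((L w).re) := by
    intro w hw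
    rw [hvμ.2.2 w hw, ← hLexp w hw, Complex.norm_exp]
  set c : ℂ := ((2 * Real.log (1 - Complex.normSq z) : ℝ) : ℂ) with hcdef
  set gz : ℂ → ℂ := fun w => f (mo z w) *
    Complex.exp ((p:ℂ)⁻¹ * (L (mo z w) + c
      - 4 * Complex.log (1 + (starRingEnd ℂ) z * w))) with hgz
  -- slit plane facts
  have hslit : ∀ w ∈ ball (0:ℂ) 1, (1 + (starRingEnd ℂ) z * w) ∈ Complex.slitPlane := by
    intro w hw
    have hz1 : ‖z‖ < 1 := by
      have := mem_ball_iff_norm.1 hz; rwa [sub_zero] at this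
    have hw1 : ‖w‖ < 1 := by
      have := mem_ball_iff_norm.1 hw; rwa [sub_zero] at this
    have habs : ‖(starRingEnd ℂ) z * w‖ < 1 := by
      rw [norm_mul, Complex.norm_conj]
      calc ‖z‖ * ‖w‖ ≤ ‖z‖ * 1 :=
        mul_le_mul_of_nonneg_left hw1.le (norm_nonneg z)
      _ < 1 := by simpa using hz1
    have hre := Complex.abs_re_le_norm ((starRingEnd ℂ) z * w)
    rw [Complex.mem_slitPlane_iff]
    left
    have : ((1:ℂ) + (starRingEnd ℂ) z * w).re = 1 + ((starRingEnd ℂ) z * w).re := by simp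
    rw [this]
    have := abs_le.1 (le_of_lt (lt_of_le_of_lt hre habs))
    linarith [neg_abs_le (((starRingEnd ℂ) z * w).re), abs_lt.1 (lt_of_le_of_lt hre habs)]
  -- differentiability of gz
  have hmodiff : DifferentiableOn ℂ (mo z) (ball (0:ℂ) 1) :=
    fun w hw => (mo_hasDerivAt hz hw).differentiableAt.differentiableWithinAt
  have hmaps : Set.MapsTo (mo z) (ball (0:ℂ) 1) (ball (0:ℂ) 1) :=
    fun w hw => mo_mem_ball hz hw
  have hgdiff : DifferentiableOn ℂ gz (ball (0:ℂ) 1) := by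
    have h1 : DifferentiableOn ℂ (fun w => f (mo z w)) (ball (0:ℂ) 1) :=
      hf.comp hmodiff hmaps
    have h2 : DifferentiableOn ℂ (fun w => L (mo z w)) (ball (0:ℂ) 1) :=
      DifferentiableOn.comp (fun w hw => (hLdiff w hw).differentiableWithinAt) hmodiff hmaps
    have h3 : DifferentiableOn ℂ (fun w => Complex.log (1 + (starRingEnd ℂ) z * w))
        (ball (0:ℂ) 1) := by
      intro w hw
      have hdin : DifferentiableAt ℂ (fun w : ℂ => 1 + (starRingEnd ℂ) z * w) w :=
        (differentiableAt_const _).add ((differentiableAt_const _).mul differentiableAt_id)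
      exact ((Complex.differentiableAt_log (hslit w hw)).comp w hdin).differentiableWithinAt
    exact h1.mul ((((h2.add_const c).sub (h3.const_mul 4)).const_mul ((p:ℂ)⁻¹)).cexp)
  -- pointwise identity
  set Φ : ℂ → ℝ := fun w => ‖f w‖ ^ p * v w with hΦ
  have hptwise : ∀ w ∈ ball (0:ℂ) 1,
      ‖gz w‖ ^ p = Complex.normSq (mo' z w) * Φ (mo z w) := by
    intro w hw
    have hu : mo z w ∈ ball (0:ℂ) 1 := mo_mem_ball hz hw
    have hden : (1 + (starRingEnd ℂ) z * w) ≠ 0 := one_add_ne hz hw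
    set a : ℝ := ‖1 + (starRingEnd ℂ) z * w‖ with hadef
    have ha0 : 0 < a := norm_pos_iff.2 hden
    -- compute the real part of the exponent
    set X : ℂ := L (mo z w) + c - 4 * Complex.log (1 + (starRingEnd ℂ) z * w) with hX
    have hXre : X.re = (L (mo z w)).re + 2 * Real.log (1 - Complex.normSq z)
        - 4 * Real.log a := by
      rw [hX]
      simp [Complex.log_re, hcdef, hadef]
    have hexp_re : ((p:ℂ)⁻¹ * X).re = p⁻¹ * X.re := by
      rw [← Complex.ofReal_inv, Complex.re_ofReal_mul]
    have hnorm : ‖gz w‖ = ‖f (mo z w)‖ * Real.exp (p⁻¹ * X.re) := by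
      rw [hgz]
      simp only [norm_mul, Complex.norm_exp, hexp_re]
      rw [← hX, hexp_re]
    have hrpow_exp : (Real.exp (p⁻¹ * X.re)) ^ p = Real.exp X.re := by
      rw [Real.rpow_def_of_pos (Real.exp_pos _), Real.log_exp]
      congr 1
      field_simp
    have hexpX : Real.exp X.re = v (mo z w) * ((1 - Complex.normSq z)^2 / a^4) := by
      have e1 : Real.exp (2 * Real.log (1 - Complex.normSq z)) = (1 - Complex.normSq z)^2 := by
        rw [show (2:ℝ) * Real.log (1 - Complex.normSq z)
          = ((2:ℕ):ℝ) * Real.log (1 - Complex.normSq z) by norm_num,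
          Real.exp_nat_mul, Real.exp_log h1s]
      have e2 : Real.exp (4 * Real.log a) = a^4 := by
        rw [show (4:ℝ) * Real.log a = ((4:ℕ):ℝ) * Real.log a by norm_num,
          Real.exp_nat_mul, Real.exp_log ha0]
      rw [hXre, Real.exp_sub, Real.exp_add, e1, e2, ← hv_eq _ hu]
      ring
    have hnormSq : Complex.normSq (mo' z w) = (1 - Complex.normSq z)^2 / a^4 := by
      rw [Complex.normSq_eq_norm_sq, mo', norm_div, norm_pow, Complex.norm_real, Real.norm_eq_abs,
        abs_of_pos h1s, ← hadef]
      rw [div_pow, ← pow_mul]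
    rw [hnorm, Real.mul_rpow (norm_nonneg _) (Real.exp_pos _).le, hrpow_exp,
      hexpX, hnormSq, hΦ]
    ring
  -- change of variables
  set F'' : ℂ → (ℂ →L[ℝ] ℂ) := fun w => ((1 : ℂ →L[ℂ] ℂ).smulRight (mo' z w)).restrictScalars ℝ
    with hF''
  have hfder : ∀ w ∈ ball (0:ℂ) 1, HasFDerivWithinAt (mo z) (F'' w) (ball (0:ℂ) 1) w :=
    fun w hw => (((mo_hasDerivAt hz hw).hasFDerivAt).restrictScalars ℝ).hasFDerivWithinAt
  have hdet : ∀ w : ℂ, |(F'' w).det| = Complex.normSq (mo' z w) := by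
    intro w
    rw [hF'', det_restrict, _root_.abs_of_nonneg (Complex.normSq_nonneg _)]
  have hΦint : IntegrableOn Φ (ball (0:ℂ) 1) volume := by
    have h0 : ((ENNReal.ofReal Real.pi)⁻¹ : ℝ≥0∞) ≠ 0 := by
      simp [ENNReal.ofReal_ne_top]
    have htop : ((ENNReal.ofReal Real.pi)⁻¹ : ℝ≥0∞) ≠ ∞ := by
      rw [ENNReal.inv_ne_top]
      exact (ENNReal.ofReal_pos.2 hπ).ne'
    have := hfp
    rw [show dA = (ENNReal.ofReal Real.pi)⁻¹ • (volume.restrict (ball (0:ℂ) 1)) from rfl] at this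
    exact (integrable_smul_measure h0 htop).1 this
  set W : ℂ → ℝ := fun w => |(F'' w).det| • Φ (mo z w) with hW
  have hWg : ∀ w ∈ ball (0:ℂ) 1, W w = ‖gz w‖ ^ p := by
    intro w hw
    rw [hW]
    simp only [smul_eq_mul]
    rw [hdet w, ← hptwise w hw]
  have hWint : IntegrableOn W (ball (0:ℂ) 1) volume := by
    refine (integrableOn_image_iff_integrableOn_abs_det_fderiv_smul volume
      measurableSet_ball hfder (mo_injOn hz) Φ).1 ?_
    rw [mo_image hz]
    exact hΦint
  have hCoV : ∫ w in ball (0:ℂ) 1, W w = ∫ x in ball (0:ℂ) 1, Φ x := by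
    conv_rhs => rw [← mo_image hz]
    rw [integral_image_eq_integral_abs_det_fderiv_smul volume measurableSet_ball hfder
      (mo_injOn hz) Φ]
  set A : ℝ := ∫ x in ball (0:ℂ) 1, Φ x with hA
  have hmain : π * ‖gz 0‖ ^ p ≤ A := by
    rw [← hCoV]
    exact radial_bound hgdiff hp hWg hWint
  have h0ball : (0:ℂ) ∈ ball (0:ℂ) 1 := by simp
  -- value at 0
  have hgz0 : ‖gz 0‖ ^ p = (1 - Complex.normSq z) * (1 - Complex.normSq z) * Φ z := by
    rw [← hWg 0 h0ball, hW]
    simp only [smul_eq_mul]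
    rw [hdet 0]
    have h1 : mo' z 0 = ((1 - Complex.normSq z : ℝ) : ℂ) := by
      rw [mo']
      simp
    rw [h1, Complex.normSq_ofReal, mo_zero]
  -- relate bergNorm to A
  have hberg : bergNorm ℂ p v f = (π⁻¹ * A) ^ (1/p) := by
    rw [bergNorm]
    congr 1
    rw [show dA = (ENNReal.ofReal Real.pi)⁻¹ • (volume.restrict (ball (0:ℂ) 1)) from rfl]
    rw [integral_smul_measure]
    rw [ENNReal.toReal_inv, ENNReal.toReal_ofReal hπ.le, smul_eq_mul]
  have hvz : 0 < v z := hv.2.1 z hz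
  have hfz0 : (0:ℝ) ≤ ‖f z‖ := norm_nonneg _
  have hA0 : 0 ≤ A := by
    rw [hA]
    refine setIntegral_nonneg measurableSet_ball fun w hw => ?_
    exact mul_nonneg (Real.rpow_nonneg (norm_nonneg _) p) (hv.2.1 w hw).le
  have hΦz : (1 - Complex.normSq z)^2 * Φ z ≤ π⁻¹ * A := by
    rw [le_inv_mul_iff₀ hπ]
    calc π * ((1 - Complex.normSq z)^2 * Φ z)
        = π * ((1 - Complex.normSq z) * (1 - Complex.normSq z) * Φ z) := by ring
    _ ≤ A := by rw [← hgz0]; exact hmain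
  -- take p-th roots
  have hkey : ((1 - Complex.normSq z)^2 * Φ z) ^ (1/p) ≤ bergNorm ℂ p v f := by
    rw [hberg]
    exact Real.rpow_le_rpow (by positivity) hΦz (by positivity)
  have hlhs_eq : ((1 - Complex.normSq z)^2 * Φ z) ^ (1/p)
      = ‖f z‖ * ((1 - Complex.normSq z) ^ ((2:ℝ)/p) * (v z) ^ (1/p)) := by
    rw [hΦ]
    rw [show (1 - Complex.normSq z)^2 * (‖f z‖ ^ p * v z)
      = (1 - Complex.normSq z)^2 * ‖f z‖ ^ p * v z by ring]
    rw [Real.mul_rpow (by positivity) hvz.le,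
      Real.mul_rpow (by positivity) (Real.rpow_nonneg hfz0 p)]
    rw [← Real.rpow_natCast (1 - Complex.normSq z) 2, ← Real.rpow_mul h1s.le]
    rw [← Real.rpow_mul hfz0, mul_one_div_cancel hpne, Real.rpow_one]
    norm_num
    ring
  have hd : 0 < (1 - ‖z‖ ^ 2) ^ ((2:ℝ)/p) * (v z) ^ (1/p) := by
    have h2 : (1:ℝ) - ‖z‖ ^ 2 = 1 - Complex.normSq z := by
      rw [Complex.sq_norm]
    rw [h2]
    positivity
  rw [le_div_iff₀ hd]
  have h2 : (1:ℝ) - ‖z‖ ^ 2 = 1 - Complex.normSq z := by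
    rw [Complex.sq_norm]
  rw [h2]
  rw [← hlhs_eq]
  exact hkey
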